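/- Let J₁, J₂, J₃ be Hermitian d×d complex matrices, ψ ∈ ℂ^d a unit vector, and c > 0 a real number such that ⟨J_i⟩_ψ = 0 for all i and ⟨J_iJ_l⟩_ψ = c·δ_{il} for all i, l. For i = 1,2,3 define p_i : ℝ³ → ℝ by p_i(θ) = |⟨J_iψ, exp(−i(θ₁J₁+θ₂J₂+θ₃J₃))ψ⟩|²/‖J_iψ‖² (note ‖J_iψ‖² = c > 0). Then p_i(θ) = c·θ_i² + o(‖θ‖²) as θ → 0; i.e., θ ↦ p_i(θ) − c·θ_i² is o(‖θ‖²) at 0. -/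

import Mathlib

open Matrix Asymptotics Nat

attribute [local instance] Matrix.linftyOpNormedRing Matrix.linftyOpNormedAlgebra
  Matrix.linftyOpNormedAddCommGroup

lemma exp_remainder2 {A : Type*} [NormedRing A] [NormedAlgebra ℂ A] [CompleteSpace A]
    (x : A) (hx : ‖x‖ ≤ 1) :
    ‖NormedSpace.exp x - (1 + x)‖ ≤ Real.exp 1 * ‖x‖ ^ 2 := by
  have hs : HasSum (fun n => ((n ! : ℂ))⁻¹ • x ^ n) (NormedSpace.exp x) :=
    NormedSpace.exp_series_hasSum_exp' x
  have hsum : Summable (fun n => ((n ! : ℂ))⁻¹ • x ^ n) := hs.summable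
  have hkey : NormedSpace.exp x - (1 + x) = ∑' n : ℕ, (((n + 2)! : ℂ))⁻¹ • x ^ (n + 2) := by
    have h := hsum.sum_add_tsum_nat_add 2
    rw [hs.tsum_eq] at h
    have hpart : ∑ n ∈ Finset.range 2, ((n ! : ℂ))⁻¹ • x ^ n = 1 + x := by
      simp [Finset.sum_range_succ]
    rw [hpart] at h
    linear_combination (norm := abel) h.symm
  rw [hkey]
  have hnorms : ∀ n : ℕ, ‖(((n + 2)! : ℂ))⁻¹ • x ^ (n + 2)‖ ≤ ((n ! : ℝ))⁻¹ * ‖x‖ ^ 2 := by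
    intro n
    rw [norm_smul]
    have h1 : ‖(((n + 2)! : ℂ))⁻¹‖ = (((n + 2)! : ℝ))⁻¹ := by
      rw [norm_inv]; norm_num
    rw [h1]
    have h2 : ‖x ^ (n + 2)‖ ≤ ‖x‖ ^ 2 := by
      calc ‖x ^ (n + 2)‖ ≤ ‖x‖ ^ (n + 2) := norm_pow_le' x (by omega)
        _ = ‖x‖ ^ 2 * ‖x‖ ^ n := by ring
        _ ≤ ‖x‖ ^ 2 * 1 := by
            gcongr
            exact pow_le_one₀ (norm_nonneg x) hx
        _ = ‖x‖ ^ 2 := mul_one _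
    have h3 : (((n + 2)! : ℝ))⁻¹ ≤ ((n ! : ℝ))⁻¹ := by
      apply inv_anti₀
      · positivity
      · exact_mod_cast Nat.factorial_le (by omega)
    exact mul_le_mul h3 h2 (norm_nonneg _) (by positivity)
  have hsummaj : Summable (fun n : ℕ => ((n ! : ℝ))⁻¹ * ‖x‖ ^ 2) := by
    apply Summable.mul_right
    simpa [one_div] using Real.summable_pow_div_factorial 1
  have hb := tsum_of_norm_bounded hsummaj.hasSum hnorms
  refine hb.trans ?_
  rw [tsum_mul_right]
  have hexp : (∑' n : ℕ, ((n ! : ℝ))⁻¹) = Real.exp 1 := by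
    rw [Real.exp_eq_exp_ℝ, NormedSpace.exp_eq_tsum_div]
    simp [one_div]
  rw [hexp]

lemma dot_mulVec_sum {d : ℕ} {ι : Type*} (s : Finset ι)
    (M : ι → Matrix (Fin d) (Fin d) ℂ) (u w : Fin d → ℂ) :
    u ⬝ᵥ ((∑ k ∈ s, M k) *ᵥ w) = ∑ k ∈ s, u ⬝ᵥ (M k *ᵥ w) := by
  classical
  induction s using Finset.induction_on with
  | empty => simp
  | insert _ _ h ih =>
      rw [Finset.sum_insert h, Finset.sum_insert h, Matrix.add_mulVec, dotProduct_add, ih]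

lemma coord_le_norm (θ : EuclideanSpace ℝ (Fin 3)) (k : Fin 3) : |θ k| ≤ ‖θ‖ := by
  rw [EuclideanSpace.norm_eq]
  have h1 : |θ k| = Real.sqrt (‖θ k‖ ^ 2) := by
    rw [Real.sqrt_sq_eq_abs, Real.norm_eq_abs, abs_abs]
  rw [h1]
  apply Real.sqrt_le_sqrt
  exact Finset.single_le_sum (f := fun j => ‖θ j‖ ^ 2) (fun j _ => by positivity)
    (Finset.mem_univ k)

theorem probability_Pi_outcome_expansion {d : ℕ}
    (J : Fin 3 → Matrix (Fin d) (Fin d) ℂ) (hJ : ∀ i, (J i).IsHermitian)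
    (ψ : Fin d → ℂ) (hψ : star ψ ⬝ᵥ ψ = 1) (c : ℝ) (hc : 0 < c)
    (h1 : ∀ i, star ψ ⬝ᵥ (J i *ᵥ ψ) = 0)
    (h2 : ∀ i l, star ψ ⬝ᵥ ((J i * J l) *ᵥ ψ) = if i = l then (c : ℂ) else 0)
    (i : Fin 3) (p : EuclideanSpace ℝ (Fin 3) → ℝ)
    (hp : ∀ θ, p θ = ‖(star (J i *ᵥ ψ) ⬝ᵥ
        ((NormedSpace.exp ((-Complex.I) • ∑ k, ((θ k : ℝ) : ℂ) • J k)) *ᵥ ψ))‖ ^ 2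
      / (∑ a, Complex.normSq ((J i *ᵥ ψ) a))) :
    (fun θ : EuclideanSpace ℝ (Fin 3) => p θ - c * (θ i) ^ 2)
      =o[nhds 0] fun θ => ‖θ‖ ^ 2 := by
  classical
  haveI : CompleteSpace (Matrix (Fin d) (Fin d) ℂ) := FiniteDimensional.complete ℂ _
  set v : Fin d → ℂ := J i *ᵥ ψ with hv
  -- transfer lemma
  have hT : ∀ N : Matrix (Fin d) (Fin d) ℂ,
      star v ⬝ᵥ (N *ᵥ ψ) = star ψ ⬝ᵥ ((J i * N) *ᵥ ψ) := by
    intro N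
    rw [hv, star_mulVec, (hJ i).eq, dotProduct_mulVec, dotProduct_mulVec, vecMul_vecMul]
  -- denominator equals c
  have hvv : star v ⬝ᵥ v = ((∑ a, Complex.normSq (v a) : ℝ) : ℂ) := by
    push_cast
    simp only [dotProduct, Pi.star_apply]
    refine Finset.sum_congr rfl fun a _ => ?_
    rw [Complex.star_def, mul_comm, Complex.mul_conj]
  have hdenom : (∑ a, Complex.normSq (v a)) = c := by
    have h := hT (J i)
    rw [← hv, hvv, h2 i i, if_pos rfl] at h
    exact_mod_cast h
  -- the linear term
  have hT1 : star v ⬝ᵥ ψ = 0 := by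
    have h := hT 1
    rw [Matrix.one_mulVec, mul_one, h1 i] at h
    exact h
  have hTA : ∀ θ : EuclideanSpace ℝ (Fin 3),
      star v ⬝ᵥ (((-Complex.I) • ∑ k, ((θ k : ℝ) : ℂ) • J k) *ᵥ ψ)
        = -Complex.I * c * ((θ i : ℝ) : ℂ) := by
    intro θ
    rw [Matrix.smul_mulVec, dotProduct_smul, dot_mulVec_sum]
    have : ∀ k, star v ⬝ᵥ (((((θ k : ℝ) : ℂ)) • J k) *ᵥ ψ)
        = ((θ k : ℝ) : ℂ) * (if i = k then (c : ℂ) else 0) := by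
      intro k
      rw [Matrix.smul_mulVec, dotProduct_smul, smul_eq_mul, hT (J k), h2 i k]
    simp only [this]
    simp [Finset.sum_ite_eq, smul_eq_mul]
    ring
  -- norm bounds
  have hTbound : ∀ N : Matrix (Fin d) (Fin d) ℂ,
      ‖star v ⬝ᵥ (N *ᵥ ψ)‖ ≤ ((∑ a, ‖v a‖) * ‖ψ‖) * ‖N‖ := by
    intro N
    calc ‖star v ⬝ᵥ (N *ᵥ ψ)‖
        = ‖∑ a, star (v a) * (N *ᵥ ψ) a‖ := rfl
      _ ≤ ∑ a, ‖star (v a) * (N *ᵥ ψ) a‖ := norm_sum_le _ _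
      _ ≤ ∑ a, ‖v a‖ * (‖N‖ * ‖ψ‖) := by
          refine Finset.sum_le_sum fun a _ => ?_
          rw [norm_mul]
          have e1 : ‖star (v a)‖ = ‖v a‖ := by
            rw [Complex.star_def, Complex.norm_conj]
          rw [e1]
          have e2 : ‖(N *ᵥ ψ) a‖ ≤ ‖N‖ * ‖ψ‖ := by
            have e3 : ‖(N *ᵥ ψ) a‖ ≤ ‖N *ᵥ ψ‖ := by
              exact norm_le_pi_norm (N *ᵥ ψ) a
            exact e3.trans (linfty_opNorm_mulVec N ψ)
          exact mul_le_mul_of_nonneg_left e2 (norm_nonneg _)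
      _ = ((∑ a, ‖v a‖) * ‖ψ‖) * ‖N‖ := by
          rw [← Finset.sum_mul]; ring
  have hAnorm : ∀ θ : EuclideanSpace ℝ (Fin 3),
      ‖(-Complex.I) • ∑ k, ((θ k : ℝ) : ℂ) • J k‖ ≤ (∑ k, ‖J k‖) * ‖θ‖ := by
    intro θ
    rw [norm_smul]
    have hI : ‖-Complex.I‖ = 1 := by simp
    rw [hI, one_mul]
    refine (norm_sum_le _ _).trans ?_
    rw [Finset.sum_mul]
    refine Finset.sum_le_sum fun k _ => ?_
    rw [norm_smul, Complex.norm_real, Real.norm_eq_abs, mul_comm]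
    exact mul_le_mul_of_nonneg_left (coord_le_norm θ k) (norm_nonneg _)
  -- constants
  set K : ℝ := (∑ a, ‖v a‖) * ‖ψ‖ with hKdef
  set Cn : ℝ := ∑ k, ‖J k‖ with hCndef
  have hK0 : 0 ≤ K := by
    apply mul_nonneg (Finset.sum_nonneg fun a _ => norm_nonneg _) (norm_nonneg _)
  have hCn0 : 0 ≤ Cn := Finset.sum_nonneg fun k _ => norm_nonneg _
  set B : ℝ := K * Real.exp 1 * Cn ^ 2 with hBdef
  have hB0 : 0 ≤ B := by positivity
  -- the main pointwise bound
  have hmain : ∀ θ : EuclideanSpace ℝ (Fin 3), ‖θ‖ ≤ 1 → ‖θ‖ ≤ (Cn + 1)⁻¹ →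
      |p θ - c * (θ i) ^ 2| ≤ (B * (2 * c + B) / c) * ‖θ‖ ^ 3 := by
    intro θ hθ1 hθ2
    set x : Matrix (Fin d) (Fin d) ℂ := (-Complex.I) • ∑ k, ((θ k : ℝ) : ℂ) • J k with hx
    have hxn : ‖x‖ ≤ Cn * ‖θ‖ := hAnorm θ
    have hx1 : ‖x‖ ≤ 1 := by
      refine hxn.trans ?_
      calc Cn * ‖θ‖ ≤ Cn * (Cn + 1)⁻¹ := by gcongr
        _ ≤ 1 := by
            rw [← div_eq_mul_inv]
            exact div_le_one_of_le₀ (by linarith) (by linarith)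
    have hdecomp : star v ⬝ᵥ (NormedSpace.exp x *ᵥ ψ) - (-Complex.I * c * ((θ i : ℝ) : ℂ))
        = star v ⬝ᵥ ((NormedSpace.exp x - (1 + x)) *ᵥ ψ) := by
      rw [Matrix.sub_mulVec, Matrix.add_mulVec, Matrix.one_mulVec, dotProduct_sub,
        dotProduct_add, hT1]
      rw [hx, hTA θ]
      ring
    have hfL : ‖star v ⬝ᵥ (NormedSpace.exp x *ᵥ ψ)
        - (-Complex.I * c * ((θ i : ℝ) : ℂ))‖ ≤ B * ‖θ‖ ^ 2 := by
      rw [hdecomp]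
      calc ‖star v ⬝ᵥ ((NormedSpace.exp x - (1 + x)) *ᵥ ψ)‖
          ≤ K * ‖NormedSpace.exp x - (1 + x)‖ := hTbound _
        _ ≤ K * (Real.exp 1 * ‖x‖ ^ 2) :=
            mul_le_mul_of_nonneg_left (exp_remainder2 x hx1) hK0
        _ ≤ K * (Real.exp 1 * (Cn * ‖θ‖) ^ 2) := by gcongr
        _ = B * ‖θ‖ ^ 2 := by rw [hBdef]; ring
    set ti : ℝ := |θ i| with hti_def
    have hL : ‖-Complex.I * c * ((θ i : ℝ) : ℂ)‖ = c * ti := by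
      rw [hti_def]
      simp [neg_mul, norm_mul, Complex.norm_real, Complex.norm_I, abs_of_pos hc]
    have h5 : |‖star v ⬝ᵥ (NormedSpace.exp x *ᵥ ψ)‖ - c * ti| ≤ B * ‖θ‖ ^ 2 := by
      have h6 := abs_norm_sub_norm_le (star v ⬝ᵥ (NormedSpace.exp x *ᵥ ψ))
        (-Complex.I * c * ((θ i : ℝ) : ℂ))
      rw [hL] at h6
      exact h6.trans hfL
    have hpθ : p θ = ‖star v ⬝ᵥ (NormedSpace.exp x *ᵥ ψ)‖ ^ 2 / c := by
      rw [hp θ, hdenom, ← hx]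
    set af : ℝ := ‖star v ⬝ᵥ (NormedSpace.exp x *ᵥ ψ)‖ with hafdef
    have haf0 : 0 ≤ af := norm_nonneg _
    clear_value af ti
    have hti : ti ≤ ‖θ‖ := hti_def ▸ coord_le_norm θ i
    have hti0 : 0 ≤ ti := hti_def ▸ abs_nonneg _
    have hn0 : 0 ≤ ‖θ‖ := norm_nonneg θ
    have hn2 : ‖θ‖ ^ 2 ≤ ‖θ‖ := by nlinarith
    have hexpand : p θ - c * (θ i) ^ 2 = (af ^ 2 - (c * ti) ^ 2) / c := by
      rw [hpθ, mul_pow, hti_def, sq_abs]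
      field_simp
    rw [hexpand, div_mul_eq_mul_div, abs_div, abs_of_pos hc]
    have hfinal : |af ^ 2 - (c * ti) ^ 2| ≤ B * (2 * c + B) * ‖θ‖ ^ 3 := by
      have hcti : c * ti ≤ c * ‖θ‖ := by gcongr
      have e : af ^ 2 - (c * ti) ^ 2 = (af - c * ti) * (af + c * ti) := by ring
      rw [e, abs_mul]
      have h7 : |af + c * ti| ≤ (2 * c + B) * ‖θ‖ := by
        have h8 := abs_le.1 h5
        have h9 : B * ‖θ‖ ^ 2 ≤ B * ‖θ‖ := mul_le_mul_of_nonneg_left hn2 hB0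
        rw [abs_of_nonneg (by positivity)]
        calc af + c * ti ≤ 2 * (c * ti) + B * ‖θ‖ ^ 2 := by linarith [h8.2]
          _ ≤ 2 * (c * ‖θ‖) + B * ‖θ‖ := by linarith
          _ = (2 * c + B) * ‖θ‖ := by ring
      calc |af - c * ti| * |af + c * ti| ≤ (B * ‖θ‖ ^ 2) * ((2 * c + B) * ‖θ‖) :=
            mul_le_mul h5 h7 (abs_nonneg _) (mul_nonneg hB0 (pow_nonneg hn0 2))
        _ = B * (2 * c + B) * ‖θ‖ ^ 3 := by ring
    exact (div_le_div_iff_of_pos_right hc).2 hfinal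
  -- conclude
  have cube : (fun θ : EuclideanSpace ℝ (Fin 3) => ‖θ‖ ^ 3) =o[nhds 0]
      (fun θ : EuclideanSpace ℝ (Fin 3) => ‖θ‖ ^ 2) := by
    have h := (isLittleO_pow_pow (𝕜 := ℝ) (by norm_num : 2 < 3)).comp_tendsto
      (tendsto_norm_zero (E := EuclideanSpace ℝ (Fin 3)))
    exact h
  refine IsBigO.trans_isLittleO ?_ cube
  rw [isBigO_iff]
  refine ⟨B * (2 * c + B) / c, ?_⟩
  have hδ : 0 < min 1 (Cn + 1)⁻¹ := by
    apply lt_min one_pos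
    positivity
  refine Metric.eventually_nhds_iff.2 ⟨min 1 (Cn + 1)⁻¹, hδ, fun {θ} hθ => ?_⟩
  rw [_root_.dist_zero_right] at hθ
  have h1' : ‖θ‖ ≤ 1 := le_of_lt (lt_of_lt_of_le hθ (min_le_left _ _))
  have h2' : ‖θ‖ ≤ (Cn + 1)⁻¹ := le_of_lt (lt_of_lt_of_le hθ (min_le_right _ _))
  have hm := hmain θ h1' h2'
  rw [Real.norm_eq_abs, Real.norm_eq_abs, abs_of_nonneg (by positivity : (0:ℝ) ≤ ‖θ‖ ^ 3)]
  exact hm
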